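/- Let U be a ring and H a right U-module whose endomorphism ring E = End_U(H) is a simple ring. Then H is a projective right U-module if and only if there exist h ∈ H and a right U-module homomorphism φ : H → U such that the endomorphism x ↦ h·φ(x) of H is nonzero. Moreover, when these equivalent conditions hold, H is a finitely generated projective right U-module. -/

import Mathlib

/-!
STATEMENT 18: let `U` be a ring and `H` a right `U`-module whose endomorphism ring
`E = End_U(H)` is simple.  Then `H` is projective iff there exist `h ∈ H` and a right
`U`-module map `φ : H → U` such that the endomorphism `x ↦ h·φ(x)` is nonzero; and in that
case `H` is finitely generated projective.
-/

open MulOpposite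

section Aux
variable {U : Type*} [Ring U] {H : Type*} [AddCommGroup H] [Module Uᵐᵒᵖ H]

/-- The endomorphism `x ↦ h·φ(x)`. -/
def eAux (h : H) (φ : H →ₗ[Uᵐᵒᵖ] U) : Module.End Uᵐᵒᵖ H where
  toFun x := op (φ x) • h
  map_add' x y := by simp [add_smul]
  map_smul' a x := by
    simp only [map_smul, RingHom.id_apply]
    rw [show op (a • φ x) = a * op (φ x) from rfl, mul_smul]

@[simp] lemma eAux_apply (h : H) (φ : H →ₗ[Uᵐᵒᵖ] U) (x : H) :
    eAux h φ x = op (φ x) • h := rfl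

lemma eAux_neg (h : H) (φ : H →ₗ[Uᵐᵒᵖ] U) : eAux (-h) φ = -(eAux h φ) := by
  ext x; simp

lemma mul_eAux (f : Module.End Uᵐᵒᵖ H) (h : H) (φ : H →ₗ[Uᵐᵒᵖ] U) :
    f * eAux h φ = eAux (f h) φ := by
  ext x; simp [Module.End.mul_apply]

lemma eAux_mul (f : Module.End Uᵐᵒᵖ H) (h : H) (φ : H →ₗ[Uᵐᵒᵖ] U) :
    eAux h φ * f = eAux h (φ ∘ₗ f) := by
  ext x; simp [Module.End.mul_apply]

/-- `op` as a `Uᵐᵒᵖ`-linear map. -/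
def opAux : U →ₗ[Uᵐᵒᵖ] Uᵐᵒᵖ where
  toFun := op
  map_add' x y := rfl
  map_smul' a u := by
    simp only [RingHom.id_apply, smul_eq_mul]
    rfl

/-- `unop` as a `Uᵐᵒᵖ`-linear map. -/
def unopAux : Uᵐᵒᵖ →ₗ[Uᵐᵒᵖ] U where
  toFun := unop
  map_add' x y := rfl
  map_smul' a u := by
    simp only [RingHom.id_apply, smul_eq_mul]
    rfl

end Aux

theorem stmt_18 {U : Type*} [Ring U] (H : Type*) [AddCommGroup H] [Module Uᵐᵒᵖ H]
    -- the endomorphism ring `E = End_U(H)` is a simple ring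
    [IsSimpleRing (Module.End Uᵐᵒᵖ H)] :
    -- `H` is projective iff some `x ↦ h·φ(x)` is a nonzero endomorphism
    (Module.Projective Uᵐᵒᵖ H ↔
      ∃ (h : H) (φ : H →ₗ[Uᵐᵒᵖ] U), ∃ x : H, op (φ x) • h ≠ 0) ∧
    -- and when these equivalent conditions hold, `H` is finitely generated projective
    ((∃ (h : H) (φ : H →ₗ[Uᵐᵒᵖ] U), ∃ x : H, op (φ x) • h ≠ 0) →
      Module.Finite Uᵐᵒᵖ H ∧ Module.Projective Uᵐᵒᵖ H) := by
  classical
  -- the key implication: nonzero `eAux h φ` implies f.g. projective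
  have key : (∃ (h : H) (φ : H →ₗ[Uᵐᵒᵖ] U), ∃ x : H, op (φ x) • h ≠ 0) →
      Module.Finite Uᵐᵒᵖ H ∧ Module.Projective Uᵐᵒᵖ H := by
    rintro ⟨h₀, φ₀, x₀, hne⟩
    set T : Set (Module.End Uᵐᵒᵖ H) :=
      Set.range (fun p : H × (H →ₗ[Uᵐᵒᵖ] U) => eAux p.1 p.2) with hT
    set A : AddSubgroup (Module.End Uᵐᵒᵖ H) := AddSubgroup.closure T with hA
    have hTA : T ⊆ A := AddSubgroup.subset_closure
    have memT : ∀ (h : H) (φ : H →ₗ[Uᵐᵒᵖ] U), eAux h φ ∈ T := fun h φ => ⟨(h, φ), rfl⟩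
    have hmul_left : ∀ {f g : Module.End Uᵐᵒᵖ H}, g ∈ A → f * g ∈ A := by
      intro f g hg
      induction hg using AddSubgroup.closure_induction with
      | mem x hx => obtain ⟨⟨h, φ⟩, rfl⟩ := hx
                    rw [mul_eAux]; exact hTA (memT _ _)
      | zero => rw [mul_zero]; exact zero_mem A
      | add x y _ _ hx hy => rw [mul_add]; exact add_mem hx hy
      | neg x _ hx => rw [mul_neg]; exact neg_mem hx
    have hmul_right : ∀ {f g : Module.End Uᵐᵒᵖ H}, f ∈ A → f * g ∈ A := by
      intro f g hf
      induction hf using AddSubgroup.closure_induction with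
      | mem x hx => obtain ⟨⟨h, φ⟩, rfl⟩ := hx
                    rw [eAux_mul]; exact hTA (memT _ _)
      | zero => rw [zero_mul]; exact zero_mem A
      | add x y _ _ hx hy => rw [add_mul]; exact add_mem hx hy
      | neg x _ hx => rw [neg_mul]; exact neg_mem hx
    -- the two-sided ideal
    let I : TwoSidedIdeal (Module.End Uᵐᵒᵖ H) :=
      TwoSidedIdeal.mk' A (zero_mem A) (fun hx hy => add_mem hx hy)
        (fun hx => neg_mem hx) (fun hy => hmul_left hy) (fun hx => hmul_right hx)
    have memI : ∀ f, f ∈ I ↔ f ∈ A := fun f => TwoSidedIdeal.mem_mk' _ _ _ _ _ _ f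
    have hIne : I ≠ ⊥ := by
      intro hbot
      have : eAux h₀ φ₀ ∈ I := (memI _).2 (hTA (memT _ _))
      rw [hbot, TwoSidedIdeal.mem_bot] at this
      exact hne (by simpa using congrFun (congrArg DFunLike.coe this) x₀)
    have hItop : I = ⊤ := (IsSimpleRing.simple.eq_bot_or_eq_top I).resolve_left hIne
    have h1A : (1 : Module.End Uᵐᵒᵖ H) ∈ A := (memI 1).1 (hItop ▸ TwoSidedIdeal.mem_top _)
    -- 1 is a finite sum of eAux's
    have hrepA : ∀ f ∈ A, ∃ s : Multiset (H × (H →ₗ[Uᵐᵒᵖ] U)),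
        f = (s.map fun p => eAux p.1 p.2).sum := by
      intro f hf
      induction hf using AddSubgroup.closure_induction with
      | mem x hx => obtain ⟨p, rfl⟩ := hx; exact ⟨{p}, by simp⟩
      | zero => exact ⟨0, by simp⟩
      | add x y _ _ hx hy =>
          obtain ⟨s, hs⟩ := hx; obtain ⟨t, ht⟩ := hy
          exact ⟨s + t, by rw [Multiset.map_add, Multiset.sum_add, ← hs, ← ht]⟩
      | neg x _ hx =>
          obtain ⟨s, hs⟩ := hx
          refine ⟨s.map fun p => (-p.1, p.2), ?_⟩
          rw [Multiset.map_map, hs]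
          simp only [Function.comp]
          rw [show (fun p : H × (H →ₗ[Uᵐᵒᵖ] U) => eAux (-p.1) p.2)
              = fun p => -(eAux p.1 p.2) from funext fun p => eAux_neg p.1 p.2]
          exact (Multiset.sum_map_neg).symm
    obtain ⟨s, hs⟩ := hrepA 1 h1A
    -- turn into a `Fin n`-indexed family
    set l := s.toList with hl
    set n := l.length with hn
    have hsum : ∀ x : H, ∑ i : Fin n, eAux (l.get i).1 (l.get i).2 x = x := by
      intro x
      have : (1 : Module.End Uᵐᵒᵖ H) = ∑ i : Fin n, eAux (l.get i).1 (l.get i).2 := by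
        rw [hs]
        conv_lhs => rw [← Multiset.coe_toList s, ← hl, ← List.ofFn_get l,
          Multiset.map_coe, List.map_ofFn, Multiset.sum_coe, List.sum_ofFn]
        rfl
      calc ∑ i : Fin n, eAux (l.get i).1 (l.get i).2 x
          = (∑ i : Fin n, eAux (l.get i).1 (l.get i).2) x := by
            rw [LinearMap.sum_apply]
        _ = x := by rw [← this]; rfl
    -- the splitting maps
    let σ : H →ₗ[Uᵐᵒᵖ] (Fin n → Uᵐᵒᵖ) := LinearMap.pi fun i => opAux ∘ₗ (l.get i).2
    let π : (Fin n → Uᵐᵒᵖ) →ₗ[Uᵐᵒᵖ] H :=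
      ∑ i : Fin n, (LinearMap.toSpanSingleton Uᵐᵒᵖ H (l.get i).1) ∘ₗ LinearMap.proj i
    have hsplit : π ∘ₗ σ = LinearMap.id := by
      ext x
      simp only [LinearMap.comp_apply, LinearMap.id_apply, π, σ, LinearMap.sum_apply,
        LinearMap.toSpanSingleton_apply, LinearMap.proj_apply, LinearMap.pi_apply]
      exact hsum x
    have hsurj : Function.Surjective π := fun x =>
      ⟨σ x, by rw [← LinearMap.comp_apply, hsplit, LinearMap.id_apply]⟩
    exact ⟨Module.Finite.of_surjective π hsurj, Module.Projective.of_split σ π hsplit⟩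
  refine ⟨⟨?_, fun h => (key h).2⟩, key⟩
  intro hproj
  obtain ⟨sec, hsec⟩ := Module.projective_def'.1 hproj
  by_contra hcon
  push_neg at hcon
  have hzero : ∀ x : H, x = (0 : H) := by
    intro x
    have hx : x = Finsupp.linearCombination Uᵐᵒᵖ id (sec x) := by
      have := congrFun (congrArg DFunLike.coe hsec) x
      simpa using this.symm
    rw [hx, Finsupp.linearCombination_apply, Finsupp.sum]
    refine Finset.sum_eq_zero fun y _ => ?_
    have := hcon y (unopAux ∘ₗ (Finsupp.lapply y) ∘ₗ sec) x
    simpa [unopAux] using this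
  have hnt : Nontrivial (Module.End Uᵐᵒᵖ H) := inferInstance
  have : (1 : Module.End Uᵐᵒᵖ H) = 0 := LinearMap.ext fun x => by
    simpa using hzero x
  exact one_ne_zero this
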